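/- Let n ≥ 0, let T be an (n+1)×(n+1) Hermitian positive definite complex matrix, let b, d ∈ ℂ^{n+1} with b ≠ 0, let z ∈ ℂ with |z| < 1, and let w ∈ ℂ. Write ⟨x,y⟩_{T⁻¹} = y* T^{−1} x. Then the (n+2)×(n+2) block matrix [[2T, b·w − d], [conj(w)·b* − d*, (w + conj(w))/(1 − z·conj(z))]] is positive semidefinite if and only if |w − (2/(1 − z·conj(z)) + ⟨d,b⟩_{T⁻¹})/⟨b,b⟩_{T⁻¹}|² ≤ |(2/(1 − z·conj(z)) + ⟨b,d⟩_{T⁻¹})/⟨b,b⟩_{T⁻¹}|² − ⟨d,d⟩_{T⁻¹}/⟨b,b⟩_{T⁻¹}. Moreover, equality holds in this inequality if and only if the block matrix is singular. -/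

import Mathlib

open scoped ComplexOrder

noncomputable section

/-- The inner product `⟨x,y⟩_{T⁻¹} = y* T⁻¹ x`. -/
def innerInv (n : ℕ) (T : Matrix (Fin (n + 1)) (Fin (n + 1)) ℂ) (x y : Fin (n + 1) → ℂ) : ℂ :=
  dotProduct (star y) (T⁻¹.mulVec x)

/-- The `(n+2)×(n+2)` block matrix
`[[2T, bw − d], [conj(w)b* − d*, (w + conj w)/(1 − z conj z)]]`. -/
def blockMat (n : ℕ) (T : Matrix (Fin (n + 1)) (Fin (n + 1)) ℂ)
    (b d : Fin (n + 1) → ℂ) (z w : ℂ) :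
    Matrix (Fin (n + 1) ⊕ Unit) (Fin (n + 1) ⊕ Unit) ℂ :=
  Matrix.fromBlocks ((2 : ℂ) • T)
    (fun i _ => b i * w - d i)
    (fun _ j => starRingEnd ℂ w * starRingEnd ℂ (b j) - starRingEnd ℂ (d j))
    (fun _ _ => (w + starRingEnd ℂ w) / (1 - z * starRingEnd ℂ z))

lemma real_equiv {Br er L R : ℝ} (hBr : 0 < Br) (h : er = Br / 2 * (R - L)) :
    (0 ≤ er ↔ L ≤ R) ∧ (L = R ↔ er = 0) := by
  subst h
  constructor <;> constructor <;> intro hh <;> nlinarith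

lemma psd_unit (M : Matrix Unit Unit ℂ) : M.PosSemidef ↔ 0 ≤ M () () := by
  rw [Matrix.posSemidef_iff_dotProduct_mulVec]
  constructor
  · intro h
    simpa [dotProduct, Matrix.mulVec] using h.2 (fun _ => 1)
  · intro h
    refine ⟨?_, fun x => ?_⟩
    · ext i j
      have him : (M () ()).im = 0 := by
        rw [Complex.nonneg_iff] at h; exact h.2.symm
      have : starRingEnd ℂ (M () ()) = M () () := Complex.conj_eq_iff_im.2 him
      simpa [Matrix.conjTranspose_apply] using this
    · have hx : dotProduct (star x) (M.mulVec x) =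
          ((Complex.normSq (x ()) : ℝ) : ℂ) * M () () := by
        simp [dotProduct, Matrix.mulVec]
        rw [Complex.normSq_eq_conj_mul_self]
        ring
      rw [hx, Complex.nonneg_iff] at *
      constructor
      · simpa using mul_nonneg (Complex.normSq_nonneg (x ())) h.1
      · simp [← h.2]

/-- Schur-complement characterization: the block matrix is positive
semidefinite iff `w` lies in the disc
`|w − (2/(1−z conj z) + ⟨d,b⟩_{T⁻¹})/⟨b,b⟩_{T⁻¹}|² ≤ |(2/(1−z conj z) + ⟨b,d⟩)/⟨b,b⟩|² − ⟨d,d⟩/⟨b,b⟩`,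
with equality iff the block matrix is singular. -/
theorem stmt14 (n : ℕ) (T : Matrix (Fin (n + 1)) (Fin (n + 1)) ℂ) (hT : T.PosDef)
    (b d : Fin (n + 1) → ℂ) (hb : b ≠ 0) (z : ℂ) (hz : ‖z‖ < 1) (w : ℂ) :
    ((blockMat n T b d z w).PosSemidef ↔
      ‖(w - (2 / (1 - z * starRingEnd ℂ z) + innerInv n T d b)
          / innerInv n T b b)‖ ^ 2 ≤
        ‖((2 / (1 - z * starRingEnd ℂ z) + innerInv n T b d)
          / innerInv n T b b)‖ ^ 2
          - (innerInv n T d d / innerInv n T b b).re) ∧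
    (‖(w - (2 / (1 - z * starRingEnd ℂ z) + innerInv n T d b)
          / innerInv n T b b)‖ ^ 2 =
        ‖((2 / (1 - z * starRingEnd ℂ z) + innerInv n T b d)
          / innerInv n T b b)‖ ^ 2
          - (innerInv n T d d / innerInv n T b b).re ↔
      (blockMat n T b d z w).det = 0) := by
  classical
  have hTi : (T⁻¹).PosDef := hT.inv
  -- scalar data
  have hB : 0 < innerInv n T b b := hTi.dotProduct_mulVec_pos hb
  have hE : 0 ≤ innerInv n T d d := hTi.posSemidef.dotProduct_mulVec_nonneg d
  set Br : ℝ := (innerInv n T b b).re with hBr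
  set Er : ℝ := (innerInv n T d d).re with hEr
  have hBrpos : 0 < Br := (Complex.pos_iff.1 hB).1
  have hBC : innerInv n T b b = (Br : ℂ) := by
    rw [Complex.pos_iff] at hB
    exact Complex.ext rfl (by simp [← hB.2])
  have hEC : innerInv n T d d = (Er : ℂ) := by
    rw [Complex.nonneg_iff] at hE
    exact Complex.ext rfl (by simp [← hE.2])
  set P : ℂ := innerInv n T b d with hPdef
  have hQP : innerInv n T d b = starRingEnd ℂ P := by
    rw [hPdef]
    have h : dotProduct (star (T⁻¹.mulVec b)) (star (star d))
        = star (dotProduct (star d) (T⁻¹.mulVec b)) :=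
      Matrix.star_dotProduct_star _ _
    rw [star_star, Matrix.star_mulVec, hTi.1, ← Matrix.dotProduct_mulVec] at h
    exact h
  -- the positive real `t = 1 - |z|^2`
  set t : ℝ := 1 - Complex.normSq z with htdef
  have hzz : 1 - z * starRingEnd ℂ z = (t : ℂ) := by
    rw [Complex.mul_conj]; push_cast [htdef]; ring
  have ht : 0 < t := by
    have h1 : Complex.normSq z = ‖z‖ ^ 2 := (Complex.sq_norm z).symm
    have h2 : 0 ≤ ‖z‖ := norm_nonneg z
    rw [htdef, h1]; nlinarith
  -- the block decomposition
  set A : Matrix (Fin (n + 1)) (Fin (n + 1)) ℂ := (2 : ℂ) • T with hAdef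
  have hA : A.PosDef := by
    rw [Matrix.posDef_iff_dotProduct_mulVec]
    constructor
    · show A.conjTranspose = A
      rw [hAdef, Matrix.conjTranspose_smul, hT.1]
      norm_num
    · intro x hx
      have h := hT.dotProduct_mulVec_pos hx
      rw [hAdef, Matrix.smul_mulVec, dotProduct_smul, smul_eq_mul]
      rw [Complex.pos_iff] at h ⊢
      constructor
      · simpa [Complex.mul_re, ← h.2] using h.1
      · simp [Complex.mul_im, ← h.2]
  haveI hinvA : Invertible A := hA.isUnit.nonempty_invertible.some
  set Bm : Matrix (Fin (n + 1)) Unit ℂ := Matrix.of (fun i _ => b i * w - d i) with hBm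
  set Dm : Matrix Unit Unit ℂ :=
    Matrix.of (fun _ _ => (w + starRingEnd ℂ w) / (1 - z * starRingEnd ℂ z)) with hDm
  have hblock : blockMat n T b d z w = Matrix.fromBlocks A Bm Bm.conjTranspose Dm := by
    unfold blockMat
    refine Matrix.ext fun i j => ?_
    rcases i with i | i <;> rcases j with j | j <;>
      simp [Matrix.fromBlocks, hAdef, hBm, hDm, Matrix.conjTranspose_apply] <;> ring
  -- the Schur complement entry
  set u : Fin (n + 1) → ℂ := fun i => b i * w - d i with hu
  set e : ℂ := (w + starRingEnd ℂ w) / (t : ℂ)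
      - 2⁻¹ * (starRingEnd ℂ w * w * (Br : ℂ) - starRingEnd ℂ w * starRingEnd ℂ P
          - w * P + (Er : ℂ)) with he
  have hAinv : A⁻¹ = (2 : ℂ)⁻¹ • T⁻¹ := by
    haveI : Invertible (2 : ℂ) := invertibleOfNonzero two_ne_zero
    have h := Matrix.inv_smul (A := T) (2 : ℂ) ((Matrix.isUnit_iff_isUnit_det T).mp hT.isUnit)
    rw [invOf_eq_inv] at h
    rw [hAdef]; exact h
  have hent : ∀ x y : Unit, (Dm - Bm.conjTranspose * A⁻¹ * Bm) x y = e := by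
    intro x y
    have h1 : (Bm.conjTranspose * A⁻¹ * Bm) () () = dotProduct (star u) (A⁻¹.mulVec u) := by
      rw [Matrix.mul_assoc]
      simp [Matrix.mul_apply, Matrix.mulVec, dotProduct, Matrix.conjTranspose_apply,
        hBm, hu]
    have h2 : dotProduct (star u) (A⁻¹.mulVec u)
        = 2⁻¹ * dotProduct (star u) (T⁻¹.mulVec u) := by
      rw [hAinv, Matrix.smul_mulVec, dotProduct_smul, smul_eq_mul]
    have h3 : dotProduct (star u) (T⁻¹.mulVec u)
        = starRingEnd ℂ w * w * (Br : ℂ) - starRingEnd ℂ w * starRingEnd ℂ P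
          - w * P + (Er : ℂ) := by
      have hu' : u = w • b - d := by
        funext i
        simp only [hu, Pi.sub_apply, Pi.smul_apply, smul_eq_mul]
        ring
      rw [hu', Matrix.mulVec_sub, Matrix.mulVec_smul]
      rw [show star (w • b - d) = starRingEnd ℂ w • star b - star d by
        simp [star_smul]]
      rw [sub_dotProduct, dotProduct_sub, dotProduct_sub,
        smul_dotProduct, smul_dotProduct, dotProduct_smul,
        dotProduct_smul, smul_eq_mul, smul_eq_mul, smul_eq_mul, smul_eq_mul]
      have e1 : dotProduct (star b) (T⁻¹.mulVec b) = (Br : ℂ) := hBC ▸ rfl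
      have e2 : dotProduct (star b) (T⁻¹.mulVec d) = starRingEnd ℂ P := hQP
      have e3 : dotProduct (star d) (T⁻¹.mulVec b) = P := rfl
      have e4 : dotProduct (star d) (T⁻¹.mulVec d) = (Er : ℂ) := hEC ▸ rfl
      rw [e1, e2, e3, e4]; ring
    simp only [Matrix.sub_apply, h1, h2, h3, hDm, Matrix.of_apply, hzz, he]
  -- PSD iff 0 ≤ e
  have hPSD : (blockMat n T b d z w).PosSemidef ↔ 0 ≤ e := by
    rw [hblock, Matrix.PosDef.fromBlocks₁₁ _ _ hA, psd_unit, hent]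

  -- det = det A * e
  have hdet : (blockMat n T b d z w).det = A.det * e := by
    rw [hblock, Matrix.det_fromBlocks₁₁, Matrix.invOf_eq_nonsing_inv]
    congr 1
    rw [Matrix.det_unique]
    exact hent _ _
  have hdetA : A.det ≠ 0 := hA.det_pos.ne'
  have hdet0 : (blockMat n T b d z w).det = 0 ↔ e = 0 := by
    rw [hdet, mul_eq_zero]
    simp [hdetA]
  -- real form of e
  have heim : e.im = 0 := by
    rw [he]
    simp [Complex.div_ofReal_im, Complex.sub_im, Complex.add_im, Complex.mul_im,
      Complex.mul_re]
    ring
  have here : e.re = 2 * w.re / t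
      - 2⁻¹ * ((w.re ^ 2 + w.im ^ 2) * Br - 2 * (w.re * P.re - w.im * P.im) + Er) := by
    rw [he]
    simp [Complex.div_ofReal_re, Complex.sub_re, Complex.add_re, Complex.mul_re,
      Complex.mul_im]
    ring
  -- real forms of the two sides of the disc inequality
  have hL : ‖(w - (2 / (1 - z * starRingEnd ℂ z) + innerInv n T d b)
      / innerInv n T b b)‖ ^ 2
      = (w.re - (2 / t + P.re) / Br) ^ 2 + (w.im + P.im / Br) ^ 2 := by
    rw [hzz, hQP, hBC, Complex.sq_norm, Complex.normSq_apply]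
    have : (2 : ℂ) / (t : ℂ) = ((2 / t : ℝ) : ℂ) := by push_cast; ring
    rw [this]
    simp [Complex.div_ofReal_re, Complex.div_ofReal_im, Complex.sub_re, Complex.sub_im,
      Complex.add_re, Complex.add_im]
    ring
  have hR : ‖((2 / (1 - z * starRingEnd ℂ z) + innerInv n T b d)
      / innerInv n T b b)‖ ^ 2 - (innerInv n T d d / innerInv n T b b).re
      = ((2 / t + P.re) / Br) ^ 2 + (P.im / Br) ^ 2 - Er / Br := by
    rw [hzz, hBC, hEC, Complex.sq_norm, Complex.normSq_apply, ← hPdef]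
    have : (2 : ℂ) / (t : ℂ) = ((2 / t : ℝ) : ℂ) := by push_cast; ring
    rw [this]
    have hdv : ((Er : ℂ) / (Br : ℂ)).re = Er / Br := by
      rw [show ((Er : ℂ) / (Br : ℂ)) = ((Er / Br : ℝ) : ℂ) by push_cast; ring]
      simp
    rw [hdv]
    simp [Complex.div_ofReal_re, Complex.div_ofReal_im, Complex.add_re, Complex.add_im]
    ring
  -- the key algebraic identity
  have hkey : e.re = Br / 2 * ((((2 / t + P.re) / Br) ^ 2 + (P.im / Br) ^ 2 - Er / Br)
      - ((w.re - (2 / t + P.re) / Br) ^ 2 + (w.im + P.im / Br) ^ 2)) := by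
    rw [here]
    field_simp
    ring
  obtain ⟨k1, k2⟩ := real_equiv hBrpos hkey
  rw [hL, hR, hPSD, hdet0]
  constructor
  · rw [Complex.nonneg_iff, heim]
    simp only [and_true]
    exact k1
  · rw [show (e = 0) ↔ e.re = 0 from
      ⟨fun h => by rw [h]; simp, fun h => Complex.ext h heim⟩]
    exact k2

end
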